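/- Let A be a unital C*-algebra and let a ∈ A with ‖a‖ ≤ 1. Then a lies in the norm closure of the set of invertible elements of A if and only if for every ε > 0 there exists a unitary u ∈ A with ‖a − u·|a|‖ < ε. Moreover, if u is a unitary with ‖a − u·|a|‖ < ε, then b := u·(|a| + ε·1) is invertible and ‖a − b‖ < 2ε. -/

import Mathlib

open scoped NNReal ENNReal

section Aux

variable {A : Type*} [CStarAlgebra A]

lemma aux_norm_one_le : ‖(1 : A)‖ ≤ 1 := by
  rcases subsingleton_or_nontrivial A with h | h
  · simp [Subsingleton.elim (1 : A) 0]
  · exact le_of_eq CStarRing.norm_one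

lemma aux_spectralRadius_mul_comm (x y : A) :
    spectralRadius ℂ (x * y) = spectralRadius ℂ (y * x) := by
  have key : ∀ p q : A, spectralRadius ℂ (p * q) ≤ spectralRadius ℂ (q * p) := by
    intro p q
    refine iSup₂_le fun k hk => ?_
    rcases eq_or_ne k 0 with rfl | hk0
    · simp
    · have hmem : k ∈ spectrum ℂ (p * q) \ {0} := ⟨hk, hk0⟩
      rw [spectrum.nonzero_mul_comm] at hmem
      exact le_iSup₂ (f := fun k (_ : k ∈ spectrum ℂ (q * p)) => (‖k‖₊ : ℝ≥0∞)) k hmem.1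
  exact le_antisymm (key x y) (key y x)

variable [PartialOrder A] [StarOrderedRing A]

lemma aux_norm_le_of_sandwich {d : A} (hd : IsSelfAdjoint d) {c : ℝ} (hc : 0 ≤ c)
    (h1 : d ≤ algebraMap ℝ A c) (h2 : - algebraMap ℝ A c ≤ d) : ‖d‖ ≤ c := by
  have hs1 : ∀ x ∈ spectrum ℝ d, x ≤ c := by
    rwa [← le_algebraMap_iff_spectrum_le]
  have hs2 : ∀ x ∈ spectrum ℝ (-d), x ≤ c := by
    rw [← le_algebraMap_iff_spectrum_le (ha := hd.neg)]
    exact neg_le.mp h2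
  rw [← hd.toReal_spectralRadius_eq_norm]
  have hrad : spectralRadius ℝ d ≤ ENNReal.ofReal c := by
    refine iSup₂_le fun k hk => ?_
    have hk1 : k ≤ c := hs1 k hk
    have hk2 : -k ≤ c := hs2 (-k) (by rw [← spectrum.neg_eq]; exact Set.neg_mem_neg.mpr hk)
    have : |k| ≤ c := abs_le.mpr ⟨by linarith, hk1⟩
    calc (‖k‖₊ : ℝ≥0∞) = ENNReal.ofReal |k| := Real.enorm_eq_ofReal_abs k
      _ ≤ ENNReal.ofReal c := ENNReal.ofReal_le_ofReal this
  calc (spectralRadius ℝ d).toReal ≤ (ENNReal.ofReal c).toReal :=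
        ENNReal.toReal_mono ENNReal.ofReal_ne_top hrad
    _ = c := ENNReal.toReal_ofReal hc

lemma aux_cfc_real_sqrt {x : A} (hx : 0 ≤ x) : cfc Real.sqrt x = CFC.sqrt x := by
  rw [CFC.sqrt_eq_cfc, cfc_nnreal_eq_real _ _ hx]
  exact cfc_congr fun t _ => by rw [Real.sqrt]

end Aux

section Mono

variable {A : Type*} [CStarAlgebra A] [PartialOrder A] [StarOrderedRing A]

open CFC in
lemma aux_sqrt_le_sqrt_of_isUnit {x y : A} (hx : 0 ≤ x) (hy : 0 ≤ y) (hyu : IsUnit y)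
    (hxy : x ≤ y) : CFC.sqrt x ≤ CFC.sqrt y := by
  rcases subsingleton_or_nontrivial A with h | h
  · exact le_of_eq (Subsingleton.elim _ _)
  have hy0 : (0 : ℝ≥0) ∉ spectrum ℝ≥0 y := spectrum.zero_notMem ℝ≥0 hyu
  have hsy : IsUnit (CFC.sqrt y) := by
    rw [CFC.sqrt_eq_cfc]
    refine (isUnit_cfc_iff _ y).mpr fun t ht => ?_
    intro h0
    have : t = 0 := by
      have := congrArg (fun s : ℝ≥0 => s * s) h0
      simpa [NNReal.sqrt_mul_self] using this
    exact hy0 (this ▸ ht)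
  have h1 : ‖CFC.sqrt x * y ^ (-(1 / 2) : ℝ)‖ ≤ 1 :=
    (le_iff_norm_sqrt_mul_rpow x y hx (hyu.isStrictlyPositive hy)).mp hxy
  refine (le_iff_norm_sqrt_mul_rpow _ _ (sqrt_nonneg _) (hsy.isStrictlyPositive (sqrt_nonneg _))).mpr ?_
  set p := CFC.sqrt (CFC.sqrt x) with hp
  set q := (CFC.sqrt y) ^ (-(1 / 2) : ℝ) with hq
  have hpn : 0 ≤ p := sqrt_nonneg _
  have hqn : 0 ≤ q := rpow_nonneg
  have hpp : p * p = CFC.sqrt x := sqrt_mul_sqrt_self _ (sqrt_nonneg _)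
  have hqq : q * q = y ^ (-(1 / 2) : ℝ) := by
    rw [hq, CFC.sqrt_eq_rpow, rpow_rpow y _ _ (by norm_num) (hyu.isStrictlyPositive hy), ← rpow_add hyu]
    norm_num
  have hz : 0 ≤ (q * p) * (p * q) := by
    have : (q * p) * (p * q) = star (p * q) * (p * q) := by
      rw [star_mul, (IsSelfAdjoint.of_nonneg hpn).star_eq, (IsSelfAdjoint.of_nonneg hqn).star_eq]
    rw [this]
    exact star_mul_self_nonneg _
  have key : ‖p * q‖ * ‖p * q‖ ≤ 1 := by
    calc ‖p * q‖ * ‖p * q‖ = ‖star (p * q) * (p * q)‖ := (CStarRing.norm_star_mul_self).symm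
      _ = ‖(q * p) * (p * q)‖ := by
          rw [star_mul, (IsSelfAdjoint.of_nonneg hpn).star_eq,
            (IsSelfAdjoint.of_nonneg hqn).star_eq]
      _ = (spectralRadius ℂ ((q * p) * (p * q))).toReal := by
          rw [(IsSelfAdjoint.of_nonneg hz).spectralRadius_eq_nnnorm]
          simp
      _ = (spectralRadius ℂ ((p * p) * (q * q))).toReal := by
          congr 1
          calc spectralRadius ℂ ((q * p) * (p * q)) = spectralRadius ℂ (q * (p * (p * q))) := by
                rw [mul_assoc]
            _ = spectralRadius ℂ ((p * (p * q)) * q) := aux_spectralRadius_mul_comm _ _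
            _ = spectralRadius ℂ ((p * p) * (q * q)) := by rw [mul_assoc, mul_assoc, mul_assoc]
      _ ≤ ((‖(p * p) * (q * q)‖₊ : ℝ≥0∞)).toReal :=
          ENNReal.toReal_mono ENNReal.coe_ne_top (spectrum.spectralRadius_le_nnnorm (𝕜 := ℂ) _)
      _ = ‖(p * p) * (q * q)‖ := by simp
      _ = ‖CFC.sqrt x * y ^ (-(1 / 2) : ℝ)‖ := by rw [hpp, hqq]
      _ ≤ 1 := h1
  nlinarith [norm_nonneg (p * q)]

end Mono

section Holder

variable {A : Type*} [CStarAlgebra A] [PartialOrder A] [StarOrderedRing A]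

lemma aux_zero_le_one : (0 : A) ≤ 1 := by
  simpa using star_mul_self_nonneg (1 : A)

open CFC in
lemma aux_sqrt_le_sqrt_add {x y : A} (hx : 0 ≤ x) (hy : 0 ≤ y) :
    CFC.sqrt x ≤ CFC.sqrt y + algebraMap ℝ A (Real.sqrt ‖x - y‖) := by
  rcases eq_or_ne x y with rfl | hne
  · simpa using le_add_of_nonneg_right (by
      have : (0:ℝ) ≤ Real.sqrt ‖x - x‖ := Real.sqrt_nonneg _
      calc (0 : A) = algebraMap ℝ A 0 := by simp
        _ ≤ algebraMap ℝ A (Real.sqrt ‖x - x‖) := by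
            rw [← sub_nonneg, ← map_sub]
            simpa [Algebra.algebraMap_eq_smul_one] using
              smul_nonneg (by simpa using this) (aux_zero_le_one (A := A)))
  set δ : ℝ := ‖x - y‖ with hδdef
  have hδ : 0 < δ := by
    rw [hδdef, norm_pos_iff]
    exact sub_ne_zero.mpr hne
  have hsx : IsSelfAdjoint x := .of_nonneg hx
  have hsy : IsSelfAdjoint y := .of_nonneg hy
  -- x ≤ y + δ•1
  have hxle : x ≤ y + algebraMap ℝ A δ := by
    have := IsSelfAdjoint.le_algebraMap_norm_self (a := x - y) (hsx.sub hsy)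
    rw [← hδdef] at this
    exact sub_le_iff_le_add'.mp this
  have halg_nn : (0 : A) ≤ algebraMap ℝ A δ := by
    simpa [Algebra.algebraMap_eq_smul_one] using smul_nonneg hδ.le (aux_zero_le_one (A := A))
  have hyδnn : 0 ≤ y + algebraMap ℝ A δ := add_nonneg hy halg_nn
  have hyδu : IsUnit (y + algebraMap ℝ A δ) := by
    refine CStarAlgebra.isUnit_of_le _ (le_add_of_nonneg_left hy) (IsUnit.isStrictlyPositive ?_ halg_nn)
    exact (isUnit_iff_ne_zero.mpr hδ.ne').map (algebraMap ℝ A)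
  have step1 : CFC.sqrt x ≤ CFC.sqrt (y + algebraMap ℝ A δ) :=
    aux_sqrt_le_sqrt_of_isUnit hx hyδnn hyδu hxle
  have step2 : CFC.sqrt (y + algebraMap ℝ A δ) ≤ CFC.sqrt y + algebraMap ℝ A (Real.sqrt δ) := by
    have hrepr : y + algebraMap ℝ A δ = cfc (fun t : ℝ => t + δ) y := by
      rw [cfc_add (a := y) (fun t : ℝ => t) (fun _ => δ), cfc_id' ℝ y, cfc_const δ y]
    rw [← aux_cfc_real_sqrt hyδnn, ← aux_cfc_real_sqrt hy, hrepr,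
      ← cfc_comp Real.sqrt (fun t : ℝ => t + δ) y]
    have : cfc Real.sqrt y + algebraMap ℝ A (Real.sqrt δ)
        = cfc (fun t : ℝ => Real.sqrt t + Real.sqrt δ) y := by
      rw [cfc_add (a := y) Real.sqrt (fun _ => Real.sqrt δ), cfc_const (Real.sqrt δ) y]
    rw [this]
    refine cfc_mono fun t _ => ?_
    rcases le_or_gt 0 t with ht | ht
    · have h1 := Real.sq_sqrt ht
      have h2 := Real.sq_sqrt hδ.le
      have h3 : Real.sqrt (t + δ) ≤ Real.sqrt ((Real.sqrt t + Real.sqrt δ) ^ 2) :=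
        Real.sqrt_le_sqrt (by nlinarith [Real.sqrt_nonneg t, Real.sqrt_nonneg δ])
      simpa [Real.sqrt_sq (by positivity : (0:ℝ) ≤ Real.sqrt t + Real.sqrt δ)] using h3
    · calc Real.sqrt (t + δ) ≤ Real.sqrt δ := Real.sqrt_le_sqrt (by linarith)
        _ ≤ Real.sqrt t + Real.sqrt δ := le_add_of_nonneg_left (Real.sqrt_nonneg t)
  exact step1.trans step2

lemma aux_sqrt_sub_le {x y : A} (hx : 0 ≤ x) (hy : 0 ≤ y) :
    ‖CFC.sqrt x - CFC.sqrt y‖ ≤ Real.sqrt ‖x - y‖ := by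
  have h1 := aux_sqrt_le_sqrt_add hx hy
  have h2 := aux_sqrt_le_sqrt_add hy hx
  rw [norm_sub_rev] at h2
  refine aux_norm_le_of_sandwich
    ((IsSelfAdjoint.of_nonneg (CFC.sqrt_nonneg _)).sub (.of_nonneg (CFC.sqrt_nonneg _)))
    (Real.sqrt_nonneg _) (sub_le_iff_le_add'.mpr h1)
    (neg_le.mpr (by rw [neg_sub]; exact sub_le_iff_le_add'.mpr h2))

end Holder

section Polar

variable {A : Type*} [CStarAlgebra A] [PartialOrder A] [StarOrderedRing A]

lemma aux_polar {b : A} (hb : IsUnit b) :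
    ∃ u ∈ unitary A, u * CFC.sqrt (star b * b) = b := by
  have hh : 0 ≤ star b * b := star_mul_self_nonneg b
  have hhu : IsUnit (star b * b) := (hb.star).mul hb
  set s := CFC.sqrt (star b * b) with hs
  have hsnn : 0 ≤ s := CFC.sqrt_nonneg _
  have hssa : IsSelfAdjoint s := .of_nonneg hsnn
  have hss : s * s = star b * b := CFC.sqrt_mul_sqrt_self _ hh
  have hsu : IsUnit s := by
    rw [hs, CFC.sqrt_eq_cfc]
    refine (isUnit_cfc_iff _ _).mpr fun t ht => ?_
    intro h0
    have ht0 : t = 0 := by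
      have := congrArg (fun r : ℝ≥0 => r * r) h0
      simpa [NNReal.sqrt_mul_self] using this
    exact (spectrum.zero_notMem ℝ≥0 hhu) (ht0 ▸ ht)
  obtain ⟨S, hS⟩ := hsu
  set v : A := (↑S⁻¹ : A) with hv
  -- star v = v
  have hvsa : star v = v := by
    have h1 : s * v = 1 := by rw [← hS]; exact S.mul_inv
    have h2 : v * s = 1 := by rw [← hS]; exact S.inv_mul
    have h3 : star v * s = 1 := by
      have := congrArg star h1
      rwa [star_mul, hssa.star_eq, star_one] at this
    calc star v = star v * (s * v) := by rw [h1, mul_one]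
      _ = (star v * s) * v := by rw [mul_assoc]
      _ = v := by rw [h3, one_mul]
  refine ⟨b * v, ?_, ?_⟩
  · rw [Unitary.mem_iff]
    constructor
    · have : star (b * v) * (b * v) = v * (s * s) * v := by
        rw [star_mul, hvsa, hss]
        simp only [mul_assoc]
      rw [this]
      have h2 : v * s = 1 := by rw [← hS]; exact S.inv_mul
      have h1 : s * v = 1 := by rw [← hS]; exact S.mul_inv
      calc v * (s * s) * v = (v * s) * (s * v) := by simp only [mul_assoc]
        _ = 1 := by rw [h1, h2, one_mul]
    · -- b * v * star (b * v) = b * (v * v) * star b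
      have hvv : (s * s) * (v * v) = 1 := by
        have h1 : s * v = 1 := by rw [← hS]; exact S.mul_inv
        calc (s * s) * (v * v) = s * (s * v) * v := by simp only [mul_assoc]
          _ = 1 := by rw [h1, mul_one, h1]
      -- v * v is the inverse of star b * b
      obtain ⟨Bs, hBs⟩ := IsUnit.star hb
      obtain ⟨B, hB⟩ := hb
      have hxinv : (star b * b) * ((↑B⁻¹ : A) * (↑Bs⁻¹ : A)) = 1 := by
        calc (star b * b) * ((↑B⁻¹ : A) * (↑Bs⁻¹ : A))
            = star b * (b * (↑B⁻¹ : A)) * (↑Bs⁻¹ : A) := by simp only [mul_assoc]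
          _ = star b * (↑Bs⁻¹ : A) := by rw [← hB, B.mul_inv, mul_one]
          _ = 1 := by rw [← hBs]; exact Bs.mul_inv
      -- uniqueness of inverse for the unit star b * b
      have huniq : v * v = (↑B⁻¹ : A) * (↑Bs⁻¹ : A) := by
        have hy : ((↑B⁻¹ : A) * (↑Bs⁻¹ : A)) * (star b * b) * (v * v) = v * v := by
          have : ((↑B⁻¹ : A) * (↑Bs⁻¹ : A)) * (star b * b) = 1 := by
            calc ((↑B⁻¹ : A) * (↑Bs⁻¹ : A)) * (star b * b)
                = (↑B⁻¹ : A) * ((↑Bs⁻¹ : A) * star b) * b := by simp only [mul_assoc]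
              _ = (↑B⁻¹ : A) * b := by rw [← hBs, Bs.inv_mul, mul_one]
              _ = 1 := by rw [← hB]; exact B.inv_mul
          rw [this, one_mul]
        calc v * v = ((↑B⁻¹ : A) * (↑Bs⁻¹ : A)) * ((star b * b) * (v * v)) := by
              rw [← mul_assoc, hy]
          _ = ((↑B⁻¹ : A) * (↑Bs⁻¹ : A)) * ((s * s) * (v * v)) := by rw [hss]
          _ = (↑B⁻¹ : A) * (↑Bs⁻¹ : A) := by rw [hvv, mul_one]
      calc (b * v) * star (b * v) = b * (v * v) * star b := by
            rw [star_mul, hvsa]; simp only [mul_assoc]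
        _ = b * ((↑B⁻¹ : A) * ((↑Bs⁻¹ : A) * star b)) := by rw [huniq]; simp only [mul_assoc]
        _ = b * (↑B⁻¹ : A) := by rw [← hBs, Bs.inv_mul, mul_one]
        _ = 1 := by rw [← hB]; exact B.mul_inv
  · have h2 : v * s = 1 := by rw [← hS]; exact S.inv_mul
    calc b * v * s = b * (v * s) := by rw [mul_assoc]
      _ = b := by rw [h2, mul_one]

end Polar

/-- An element of the unit ball lies in the closure of the invertibles iff it is approximately
of the form `u * |a|` with `u` unitary; moreover `u * (|a| + ε)` is then an invertible
`2ε`-approximation of `a`. Here `|a| = (a* a)^(1/2)` via the continuous functional calculus. -/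
theorem stmt_3 {A : Type*} [CStarAlgebra A] (a : A) (ha : ‖a‖ ≤ 1) :
    (a ∈ closure {x : A | IsUnit x} ↔
      ∀ ε > (0 : ℝ), ∃ u ∈ unitary A, ‖a - u * cfc Real.sqrt (star a * a)‖ < ε) ∧
    (∀ ε > (0 : ℝ), ∀ u ∈ unitary A, ‖a - u * cfc Real.sqrt (star a * a)‖ < ε →
      IsUnit (u * (cfc Real.sqrt (star a * a) + ε • (1 : A))) ∧
      ‖a - u * (cfc Real.sqrt (star a * a) + ε • (1 : A))‖ < 2 * ε) := by
  letI : PartialOrder A := CStarAlgebra.spectralOrder A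
  letI : StarOrderedRing A := CStarAlgebra.spectralOrderedRing A
  have hsa : 0 ≤ star a * a := star_mul_self_nonneg a
  rw [aux_cfc_real_sqrt hsa]
  set m := CFC.sqrt (star a * a) with hm
  have hmnn : 0 ≤ m := CFC.sqrt_nonneg _
  -- Part 2
  have part2 : ∀ ε > (0 : ℝ), ∀ u ∈ unitary A, ‖a - u * m‖ < ε →
      IsUnit (u * (m + ε • (1 : A))) ∧ ‖a - u * (m + ε • (1 : A))‖ < 2 * ε := by
    intro ε hε u hu hlt
    have huu : IsUnit u := ⟨⟨u, star u, (Unitary.mem_iff.mp hu).2, (Unitary.mem_iff.mp hu).1⟩, rfl⟩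
    have h0 : IsUnit (ε • (1 : A)) := by
      refine isUnit_iff_exists.mpr ⟨ε⁻¹ • 1, ?_, ?_⟩ <;>
        simp [smul_smul, mul_inv_cancel₀ hε.ne', inv_mul_cancel₀ hε.ne']
    have h0nn : (0 : A) ≤ ε • (1 : A) := smul_nonneg hε.le (aux_zero_le_one (A := A))
    have hunit : IsUnit (m + ε • (1 : A)) :=
      CStarAlgebra.isUnit_of_le _ (le_add_of_nonneg_left hmnn) (h0.isStrictlyPositive h0nn)
    refine ⟨huu.mul hunit, ?_⟩
    have hrw : a - u * (m + ε • (1 : A)) = (a - u * m) - ε • u := by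
      rw [mul_add, mul_smul_comm, mul_one]
      abel
    have hnu : ‖u‖ ≤ 1 := by
      have := CStarRing.norm_mem_unitary_mul (1 : A) hu
      rw [mul_one] at this
      rw [this]
      exact aux_norm_one_le
    calc ‖a - u * (m + ε • (1 : A))‖ = ‖(a - u * m) - ε • u‖ := by rw [hrw]
      _ ≤ ‖a - u * m‖ + ‖ε • u‖ := norm_sub_le _ _
      _ = ‖a - u * m‖ + ε * ‖u‖ := by rw [norm_smul, Real.norm_of_nonneg hε.le]
      _ < ε + ε * 1 := by
          have : ε * ‖u‖ ≤ ε * 1 := by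
            exact mul_le_mul_of_nonneg_left hnu hε.le
          linarith
      _ = 2 * ε := by ring
  refine ⟨⟨?_, ?_⟩, part2⟩
  · -- forward direction
    intro hmem ε hε
    have hδpos : 0 < min 1 (min (ε / 4) ((ε / 2) ^ 2 / 3)) := by positivity
    set δ := min 1 (min (ε / 4) ((ε / 2) ^ 2 / 3)) with hδdef
    obtain ⟨b, hbmem, hbdist⟩ := Metric.mem_closure_iff.mp hmem δ hδpos
    have hbU : IsUnit b := hbmem
    have hab : ‖a - b‖ < δ := by rwa [dist_eq_norm] at hbdist
    obtain ⟨u, hu, hub⟩ := aux_polar hbU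
    refine ⟨u, hu, ?_⟩
    have hδ1 : δ ≤ 1 := min_le_left _ _
    have hδ2 : δ ≤ ε / 4 := (min_le_right _ _).trans (min_le_left _ _)
    have hδ3 : δ ≤ (ε / 2) ^ 2 / 3 := (min_le_right _ _).trans (min_le_right _ _)
    have hbnorm : ‖b‖ ≤ 2 := by
      have : ‖b‖ ≤ ‖a‖ + ‖a - b‖ := by
        calc ‖b‖ = ‖a - (a - b)‖ := by congr 1; abel
          _ ≤ ‖a‖ + ‖a - b‖ := norm_sub_le _ _
      linarith
    have hdiff : ‖star b * b - star a * a‖ ≤ 3 * δ := by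
      have hsplit : star b * b - star a * a = star b * (b - a) + (star b - star a) * a := by
        noncomm_ring
      have h1 : ‖star b * (b - a)‖ ≤ 2 * δ := by
        calc ‖star b * (b - a)‖ ≤ ‖star b‖ * ‖b - a‖ := norm_mul_le _ _
          _ = ‖b‖ * ‖a - b‖ := by rw [norm_star, norm_sub_rev]
          _ ≤ 2 * δ := by
              have := norm_nonneg (a - b)
              nlinarith
      have h2 : ‖(star b - star a) * a‖ ≤ δ := by
        calc ‖(star b - star a) * a‖ ≤ ‖star b - star a‖ * ‖a‖ := norm_mul_le _ _
          _ = ‖a - b‖ * ‖a‖ := by rw [← star_sub, norm_star, norm_sub_rev]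
          _ ≤ δ * 1 := by
              have := norm_nonneg (a - b)
              have := norm_nonneg a
              nlinarith
          _ = δ := mul_one δ
      calc ‖star b * b - star a * a‖
          ≤ ‖star b * (b - a)‖ + ‖(star b - star a) * a‖ := by rw [hsplit]; exact norm_add_le _ _
        _ ≤ 3 * δ := by linarith
    have hsqrt : ‖CFC.sqrt (star b * b) - m‖ ≤ ε / 2 := by
      have h1 : ‖CFC.sqrt (star b * b) - m‖ ≤ Real.sqrt ‖star b * b - star a * a‖ :=
        aux_sqrt_sub_le (star_mul_self_nonneg b) hsa
      have h2 : Real.sqrt ‖star b * b - star a * a‖ ≤ Real.sqrt ((ε / 2) ^ 2) := by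
        refine Real.sqrt_le_sqrt ?_
        linarith
      rw [Real.sqrt_sq (by linarith : (0:ℝ) ≤ ε / 2)] at h2
      linarith
    calc ‖a - u * m‖ = ‖(a - b) + u * (CFC.sqrt (star b * b) - m)‖ := by
          congr 1
          rw [mul_sub, hub]
          abel
      _ ≤ ‖a - b‖ + ‖u * (CFC.sqrt (star b * b) - m)‖ := norm_add_le _ _
      _ = ‖a - b‖ + ‖CFC.sqrt (star b * b) - m‖ := by rw [CStarRing.norm_mem_unitary_mul _ hu]
      _ < δ + ε / 2 := by linarith
      _ ≤ ε / 4 + ε / 2 := by linarith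
      _ < ε := by linarith
  · -- reverse direction
    intro h
    rw [Metric.mem_closure_iff]
    intro ε hε
    obtain ⟨u, hu, hlt⟩ := h (ε / 2) (by linarith)
    obtain ⟨hunit, hnorm⟩ := part2 (ε / 2) (by linarith) u hu hlt
    refine ⟨u * (m + (ε / 2) • (1 : A)), hunit, ?_⟩
    rw [dist_eq_norm]
    linarith
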